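/- Let n₀ ≥ 3 be an odd integer. If the logarithmic Sobolev inequality H_{n₀}[λ] ≤ 2⟨λ, Ψ(n₀)λ⟩ holds for all λ ∈ [0,∞)^{n₀}, where Ψ(n₀) = (1/n₀)·F_{n₀}·diag(ψ_{n₀}(0),…,ψ_{n₀}(n₀−1))·F_{n₀}^{−1}, then for every integer m ≥ 1 the inequality H_{n₀·2^m}[λ] ≤ 2⟨λ, Ψ(n₀·2^m)λ⟩ holds for all λ ∈ [0,∞)^{n₀·2^m}, where Ψ(n₀·2^m) is defined analogously from the word-length ψ_{n₀·2^m}. -/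

import Mathlib

open scoped BigOperators ComplexOrder

/-- The `m × m` DFT matrix with entries `e^{2πijk/m}`. -/
noncomputable def dftMatrix (m : ℕ) : Matrix (Fin m) (Fin m) ℂ :=
  Matrix.of fun j k => Complex.exp (2 * Real.pi * Complex.I * (j.val : ℂ) * (k.val : ℂ) / m)

/-- `Γ(m) = (1/m)·F_m·diag(γ(0),…,γ(m-1))·F_m⁻¹` for a weight `γ : ℕ → ℝ`. -/
noncomputable def GammaMat (m : ℕ) (γ : ℕ → ℝ) : Matrix (Fin m) (Fin m) ℂ :=
  (1 / m : ℂ) • (dftMatrix m * Matrix.diagonal (fun k : Fin m => (γ k.val : ℂ)) * (dftMatrix m)⁻¹)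

/-- `⟨u, Mu⟩ = ∑_j conj(u_j) (Mu)_j` for a real vector `u`. -/
noncomputable def quadForm (m : ℕ) (M : Matrix (Fin m) (Fin m) ℂ) (u : Fin m → ℝ) : ℂ :=
  ∑ j : Fin m, (starRingEnd ℂ) (u j : ℂ) * M.mulVec (fun i => (u i : ℂ)) j

/-- The interleaved vector `λ = (a_0, b_0, a_1, b_1, …, a_{n-1}, b_{n-1})`. -/
noncomputable def interleave (n : ℕ) (a b : Fin n → ℝ) : Fin (2 * n) → ℝ :=
  fun j =>
    if j.val % 2 = 0 then a ⟨j.val / 2, by have := j.isLt; omega⟩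
    else b ⟨j.val / 2, by have := j.isLt; omega⟩

/-- Entropy functional `H_m[λ]`. -/
noncomputable def entH (m : ℕ) (l : Fin m → ℝ) : ℝ :=
  (1 / m : ℝ) * ∑ x : Fin m, l x ^ 2 * Real.log (l x ^ 2)
    - ((∑ x : Fin m, l x ^ 2) / m) * Real.log ((∑ x : Fin m, l x ^ 2) / m)

/-- Word-length function on `ℤ_n`: `ψ_n(k) = min(k, n-k)`. -/
noncomputable def psiLen (n k : ℕ) : ℝ := min (k : ℝ) ((n - k : ℕ) : ℝ)

/-- `Ψ(m) = (1/m)·F_m·diag(ψ_m(0),…,ψ_m(m-1))·F_m⁻¹`. -/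
noncomputable def PsiMat (m : ℕ) : Matrix (Fin m) (Fin m) ℂ :=
  GammaMat m (fun k => psiLen m k)


namespace LSIAux
set_option linter.unusedTactic false
open Complex Finset
noncomputable def ec (m : ℕ) (t : ℤ) : ℂ := Complex.exp (2 * Real.pi * Complex.I * t / m)

lemma ec_pow (m : ℕ) (t : ℤ) (k : ℕ) : ec m (t * k) = (ec m t) ^ k := by
  unfold ec
  rw [← Complex.exp_nat_mul]
  congr 1
  push_cast
  ring

lemma two_pi_I_ne : (2 * (Real.pi:ℂ) * Complex.I) ≠ 0 := by
  simp [Real.pi_ne_zero, Complex.I_ne_zero, Complex.ofReal_ne_zero]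

lemma ec_eq_one_iff (m : ℕ) (hm : 0 < m) (t : ℤ) : ec m t = 1 ↔ (m:ℤ) ∣ t := by
  have hm' : (m:ℂ) ≠ 0 := by exact_mod_cast hm.ne'
  unfold ec
  rw [Complex.exp_eq_one_iff]
  constructor
  · rintro ⟨n, hn⟩
    refine ⟨n, ?_⟩
    have : (t : ℂ) = n * m := by
      have h := hn
      field_simp at h
      -- h : 2 * π * I * t = n * (2 * π * I) * m or similar
      have h2 := two_pi_I_ne
      have : (2 * (Real.pi:ℂ) * Complex.I) * t = (2 * (Real.pi:ℂ) * Complex.I) * (n * m) := by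
        linear_combination (2 * (Real.pi:ℂ) * Complex.I) * h
      exact mul_left_cancel₀ h2 this
    have := this; exact_mod_cast (by rw [mul_comm] at this; exact this : (t:ℂ) = m * n)
  · rintro ⟨c, rfl⟩
    refine ⟨c, ?_⟩
    field_simp
    push_cast
    simp

lemma ec_pow_m (m : ℕ) (hm : 0 < m) (t : ℤ) : (ec m t) ^ m = 1 := by
  rw [← ec_pow]
  exact (ec_eq_one_iff m hm _).2 ⟨t, by ring⟩

lemma sum_ec (m : ℕ) (hm : 0 < m) (t : ℤ) :
    ∑ k ∈ Finset.range m, ec m (t * k) = if (m:ℤ) ∣ t then (m:ℂ) else 0 := by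
  by_cases h : (m:ℤ) ∣ t
  · simp only [h, if_true]
    have h1 : ec m t = 1 := (ec_eq_one_iff m hm t).2 h
    calc ∑ k ∈ Finset.range m, ec m (t * k) = ∑ k ∈ Finset.range m, (1:ℂ)^k := by
          simp_rw [ec_pow, h1]
      _ = m := by simp
  · simp only [h, if_false]
    have h1 : ec m t ≠ 1 := fun hh => h ((ec_eq_one_iff m hm t).1 hh)
    simp_rw [ec_pow]
    rw [geom_sum_eq h1, ec_pow_m m hm t]
    simp


lemma ec_add (m : ℕ) (s t : ℤ) : ec m (s + t) = ec m s * ec m t := by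
  unfold ec; rw [← Complex.exp_add]; congr 1; push_cast; ring

lemma ec_conj (m : ℕ) (t : ℤ) : (starRingEnd ℂ) (ec m t) = ec m (-t) := by
  unfold ec
  rw [← Complex.exp_conj]
  congr 1
  have h1 : ((2:ℂ) * Real.pi * Complex.I * t / m) = (((2:ℝ) * Real.pi * t / m : ℝ):ℂ) * Complex.I := by push_cast; ring
  have h2 : ((2:ℂ) * Real.pi * Complex.I * (-t:ℤ) / m) = (((2:ℝ) * Real.pi * (-(t:ℝ)) / m : ℝ):ℂ) * Complex.I := by push_cast; ring
  rw [h1, h2]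
  simp only [map_mul, Complex.conj_I, Complex.conj_ofReal]
  push_cast
  ring

lemma dft_apply (m : ℕ) (j k : Fin m) : dftMatrix m j k = ec m ((j:ℤ) * (k:ℤ)) := by
  unfold dftMatrix ec
  simp only [Matrix.of_apply]
  congr 1
  push_cast
  ring

noncomputable def dftInv (m : ℕ) : Matrix (Fin m) (Fin m) ℂ :=
  Matrix.of fun j k => ec m (-((j:ℤ) * (k:ℤ))) / m

lemma dft_mul_inv (m : ℕ) (hm : 0 < m) : dftMatrix m * dftInv m = 1 := by
  ext j l
  simp only [Matrix.mul_apply, dftInv, Matrix.of_apply, dft_apply]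
  have : ∀ k : Fin m, ec m ((j:ℤ)*(k:ℤ)) * (ec m (-((k:ℤ)*(l:ℤ))) / m)
      = ec m (((j:ℤ)-(l:ℤ)) * (k:ℤ)) / m := by
    intro k
    rw [mul_div_assoc', ← ec_add]
    congr 2
    ring
  simp_rw [this, ← Finset.sum_div]
  have hsum : ∑ k : Fin m, ec m (((j:ℤ)-(l:ℤ)) * (k:ℤ)) = ∑ k ∈ Finset.range m, ec m (((j:ℤ)-(l:ℤ)) * k) := by
    rw [Finset.sum_range fun k => ec m (((j:ℤ)-(l:ℤ)) * k)]
  rw [hsum, sum_ec m hm]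
  by_cases hjl : j = l
  · subst hjl
    simp [Matrix.one_apply, div_self (show (m:ℂ) ≠ 0 by exact_mod_cast hm.ne')]
  · have : ¬ ((m:ℤ) ∣ ((j:ℤ) - (l:ℤ))) := by
      have h1 : (j:ℤ) - (l:ℤ) ≠ 0 := by
        simp only [sub_ne_zero]
        exact_mod_cast fun h => hjl (Fin.ext (by exact_mod_cast h))
      have hj := j.isLt; have hl := l.isLt
      have h2 : |(j:ℤ) - (l:ℤ)| < m := by
        rw [abs_sub_lt_iff]
        constructor <;> [skip; skip] <;> push_cast <;> omega
      intro hd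
      have hd' : (m:ℤ) ∣ |(j:ℤ) - (l:ℤ)| := (dvd_abs _ _).mpr hd
      have := Int.le_of_dvd (abs_pos.2 h1) hd'
      omega
    simp [this, Matrix.one_apply, hjl]

lemma dft_inv_eq (m : ℕ) (hm : 0 < m) : (dftMatrix m)⁻¹ = dftInv m :=
  Matrix.inv_eq_right_inv (dft_mul_inv m hm)

noncomputable def Fh (m : ℕ) (l : Fin m → ℝ) (k : ℕ) : ℂ :=
  ∑ j : Fin m, (l j : ℂ) * ec m ((j:ℤ) * (k:ℤ))

lemma quadForm_eq_fourier (m : ℕ) (hm : 0 < m) (γ : ℕ → ℝ) (l : Fin m → ℝ) :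
    quadForm m (GammaMat m γ) l
      = (((1 / (m:ℝ)^2) * ∑ k ∈ Finset.range m, γ k * Complex.normSq (Fh m l k) : ℝ) : ℂ) := by
  have hm' : (m:ℂ) ≠ 0 := by exact_mod_cast hm.ne'
  have hentry : ∀ j i : Fin m, (GammaMat m γ) j i
      = (1/(m:ℂ)^2) * ∑ k : Fin m, (γ (k:ℕ) : ℂ) * (ec m ((j:ℤ)*(k:ℤ)) * ec m (-((i:ℤ)*(k:ℤ)))) := by
    intro j i
    unfold GammaMat
    rw [dft_inv_eq m hm]
    simp only [Matrix.smul_apply, smul_eq_mul]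
    rw [show dftMatrix m * Matrix.diagonal (fun k : Fin m => (γ (k:ℕ) : ℂ)) * dftInv m
        = Matrix.of (fun j i => ∑ k : Fin m, (dftMatrix m j k * (γ (k:ℕ) : ℂ)) * dftInv m k i) from ?_]
    · simp only [Matrix.of_apply]
      rw [Finset.mul_sum, Finset.mul_sum]
      refine Finset.sum_congr rfl fun k _ => ?_
      rw [dft_apply]
      simp only [dftInv, Matrix.of_apply]
      rw [show (-((i:ℤ) * (k:ℤ))) = (-((k:ℤ)*(i:ℤ))) by ring]
      field_simp
    · ext j i
      rw [Matrix.mul_apply, Matrix.of_apply]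
      refine Finset.sum_congr rfl fun k _ => ?_
      rw [Matrix.mul_diagonal]
  unfold quadForm
  have hconjFh : ∀ k : Fin m, (starRingEnd ℂ) (Fh m l k) = ∑ i : Fin m, (l i : ℂ) * ec m (-((i:ℤ)*(k:ℤ))) := by
    intro k
    unfold Fh
    rw [map_sum]
    refine Finset.sum_congr rfl fun i _ => ?_
    rw [map_mul, Complex.conj_ofReal, ec_conj]
  have hterm : ∀ k : Fin m, ((γ k * Complex.normSq (Fh m l k) : ℝ) : ℂ)
      = (γ (k:ℕ) : ℂ) * (Fh m l k * ∑ i : Fin m, (l i : ℂ) * ec m (-((i:ℤ)*(k:ℤ)))) := by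
    intro k
    rw [← hconjFh, Complex.mul_conj]
    norm_cast
  calc ∑ j : Fin m, (starRingEnd ℂ) ((l j : ℂ)) * (GammaMat m γ).mulVec (fun i => (l i : ℂ)) j
      = ∑ j : Fin m, (l j : ℂ) * ∑ i : Fin m, ((1/(m:ℂ)^2) * ∑ k : Fin m, (γ (k:ℕ) : ℂ) * (ec m ((j:ℤ)*(k:ℤ)) * ec m (-((i:ℤ)*(k:ℤ))))) * (l i : ℂ) := by
        refine Finset.sum_congr rfl fun j _ => ?_
        rw [Complex.conj_ofReal]
        congr 1
        rw [Matrix.mulVec, dotProduct]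
        refine Finset.sum_congr rfl fun i _ => ?_
        rw [hentry j i]
    _ = ∑ j : Fin m, ((1/(m:ℂ)^2) * ∑ k : Fin m, ∑ i : Fin m, (γ (k:ℕ) : ℂ) * (((l j : ℂ) * ec m ((j:ℤ)*(k:ℤ))) * ((l i : ℂ) * ec m (-((i:ℤ)*(k:ℤ)))))) := by
        refine Finset.sum_congr rfl fun j _ => ?_
        simp_rw [Finset.mul_sum, Finset.sum_mul, Finset.mul_sum]
        rw [Finset.sum_comm]
        refine Finset.sum_congr rfl fun k _ => Finset.sum_congr rfl fun i _ => by ring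
    _ = (1/(m:ℂ)^2) * ∑ k : Fin m, (γ (k:ℕ) : ℂ) * ((∑ j : Fin m, (l j : ℂ) * ec m ((j:ℤ)*(k:ℤ))) * (∑ i : Fin m, (l i : ℂ) * ec m (-((i:ℤ)*(k:ℤ))))) := by
        rw [← Finset.mul_sum]
        congr 1
        rw [Finset.sum_comm]
        refine Finset.sum_congr rfl fun k _ => ?_
        rw [Finset.sum_mul_sum, Finset.mul_sum]
        refine Finset.sum_congr rfl fun j _ => ?_
        rw [Finset.mul_sum]
    _ = (1/(m:ℂ)^2) * ∑ k : Fin m, ((γ (k:ℕ) * Complex.normSq (Fh m l k) : ℝ) : ℂ) := by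
        congr 1
        refine Finset.sum_congr rfl fun k _ => ?_
        rw [hterm k]
        rfl
    _ = (((1 / (m:ℝ)^2) * ∑ k ∈ Finset.range m, γ k * Complex.normSq (Fh m l k) : ℝ) : ℂ) := by
        rw [← Fin.sum_univ_eq_sum_range (fun k => γ k * Complex.normSq (Fh m l k)) m]
        push_cast
        ring

section TPL
open Real

lemma hasDerivAt_G (u : ℝ) (h0 : 0 < u) (h1 : u < 1) :
    HasDerivAt (fun x : ℝ => 2*x/Real.sqrt (1-x^2) - Real.log (1+x) + Real.log (1-x))
      ((2*Real.sqrt (1-u^2) - 2*u*((-(2*u))/(2*Real.sqrt (1-u^2))))/(Real.sqrt (1-u^2))^2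
        - 1/(1+u) + -(1/(1-u))) u := by
  have hc : (0:ℝ) < 1 - u^2 := by nlinarith
  have hsc : 0 < Real.sqrt (1-u^2) := Real.sqrt_pos.2 hc
  have h1u : (0:ℝ) < 1 + u := by linarith
  have h2u : (0:ℝ) < 1 - u := by linarith
  have hq : HasDerivAt (fun x : ℝ => 1 - x^2) (-(2*u)) u := by
    simpa using ((hasDerivAt_pow 2 u).const_sub 1)
  have hsqrt : HasDerivAt (fun x : ℝ => Real.sqrt (1-x^2)) (-(2*u)/(2*Real.sqrt (1-u^2))) u := by
    have := (Real.hasDerivAt_sqrt hc.ne').comp u hq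
    simpa [Function.comp_def, div_eq_inv_mul, mul_comm] using this
  have hnum : HasDerivAt (fun x : ℝ => 2*x) (2:ℝ) u := by
    simpa using (hasDerivAt_id u).const_mul (2:ℝ)
  have hdiv := hnum.div hsqrt hsc.ne'
  have hlog1 : HasDerivAt (fun x : ℝ => Real.log (1+x)) (1/(1+u)) u := by
    have h : HasDerivAt (fun x : ℝ => 1 + x) 1 u := by simpa using (hasDerivAt_id u).const_add (1:ℝ)
    simpa [Function.comp_def] using (Real.hasDerivAt_log h1u.ne').comp u h
  have hlog2 : HasDerivAt (fun x : ℝ => Real.log (1-x)) (-(1/(1-u))) u := by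
    have h : HasDerivAt (fun x : ℝ => 1 - x) (-1) u := by simpa using (hasDerivAt_id u).const_sub (1:ℝ)
    have := (Real.hasDerivAt_log h2u.ne').comp u h
    simpa [Function.comp_def] using this
  exact (hdiv.sub hlog1).add hlog2

lemma G_deriv_nonneg (u : ℝ) (h0 : 0 < u) (h1 : u < 1) :
    0 ≤ (2*Real.sqrt (1-u^2) - 2*u*((-(2*u))/(2*Real.sqrt (1-u^2))))/(Real.sqrt (1-u^2))^2
        - 1/(1+u) + -(1/(1-u)) := by
  have hc : (0:ℝ) < 1 - u^2 := by nlinarith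
  set s := Real.sqrt (1-u^2) with hs
  have hsc : 0 < s := Real.sqrt_pos.2 hc
  have hsq : s^2 = 1-u^2 := Real.sq_sqrt hc.le
  have hs1 : s ≤ 1 := Real.sqrt_le_one.2 (by nlinarith)
  have h1u : (0:ℝ) < 1 + u := by linarith
  have h2u : (0:ℝ) < 1 - u := by linarith
  have e1 : (2*s - 2*u*((-(2*u))/(2*s)))/s^2 = (2*s^2+2*u^2)/s^3 := by
    field_simp
    ring
  have e2 : 1/(1+u) + 1/(1-u) = 2/s^2 := by
    rw [hsq]
    field_simp
    ring
  have e3 : (2*s^2+2*u^2)/s^3 - 2/s^2 = (2-2*s)/s^3 := by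
    rw [div_sub_div _ _ (by positivity) (by positivity)]
    rw [div_eq_div_iff (by positivity) (by positivity)]
    have h5 : s^5 = s*(1-u^2)^2 := by
      rw [show s^5 = s*(s^2)^2 by ring, hsq]
    have h3 : s^3 = s*(1-u^2) := by
      rw [show s^3 = s*s^2 by ring, hsq]
    rw [show ((2*s^2+2*u^2)*s^2 - s^3*2)*s^3 = (2*s^2+2*u^2)*s^2*s^3 - 2*(s^3)^2 from by ring]
    rw [show (2-2*s)*(s^3*s^2) = 2*s^3*s^2 - 2*s*s^5 from by ring]
    rw [h3, h5, hsq]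
    ring
  have e4 : (0:ℝ) ≤ (2-2*s)/s^3 := by
    apply div_nonneg (by linarith) (by positivity)
  calc (0:ℝ) ≤ (2-2*s)/s^3 := e4
    _ = (2*s^2+2*u^2)/s^3 - 2/s^2 := e3.symm
    _ = (2*s - 2*u*((-(2*u))/(2*s)))/s^2 - (1/(1+u) + 1/(1-u)) := by rw [e1, e2]
    _ = (2*s - 2*u*((-(2*u))/(2*s)))/s^2 - 1/(1+u) + -(1/(1-u)) := by ring

lemma G_nonneg (u : ℝ) (h0 : 0 ≤ u) (h1 : u < 1) :
    0 ≤ 2*u/Real.sqrt (1-u^2) - Real.log (1+u) + Real.log (1-u) := by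
  set G : ℝ → ℝ := fun x => 2*x/Real.sqrt (1-x^2) - Real.log (1+x) + Real.log (1-x) with hG
  have hcont : ContinuousOn G (Set.Ico 0 1) := by
    intro x hx
    obtain ⟨hx0, hx1⟩ := hx
    have hc : (0:ℝ) < 1 - x^2 := by nlinarith
    have h1u : (0:ℝ) < 1 + x := by linarith
    have h2u : (0:ℝ) < 1 - x := by linarith
    apply ContinuousAt.continuousWithinAt
    have hdivc : ContinuousAt (fun x : ℝ => 2*x/Real.sqrt (1-x^2)) x := by
      apply ContinuousAt.div
      · fun_prop
      · exact (Real.continuous_sqrt.comp (by fun_prop)).continuousAt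
      · exact (Real.sqrt_pos.2 hc).ne'
    apply ContinuousAt.add
    apply ContinuousAt.sub hdivc
    · exact (Real.continuousAt_log h1u.ne').comp (by fun_prop)
    · exact (Real.continuousAt_log h2u.ne').comp (by fun_prop)
  have hmono : MonotoneOn G (Set.Ico 0 1) := by
    apply monotoneOn_of_deriv_nonneg (convex_Ico 0 1) hcont
    · intro x hx
      rw [interior_Ico] at hx
      exact (hasDerivAt_G x hx.1 hx.2).differentiableAt.differentiableWithinAt
    · intro x hx
      rw [interior_Ico] at hx
      rw [(hasDerivAt_G x hx.1 hx.2).deriv]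
      exact G_deriv_nonneg x hx.1 hx.2
  have h00 : G 0 = 0 := by simp [hG]
  have := hmono (Set.mem_Ico.2 ⟨le_refl 0, by norm_num⟩) (Set.mem_Ico.2 ⟨h0, h1⟩) h0
  rw [h00] at this
  exact this

lemma hasDerivAt_D (u : ℝ) (h0 : 0 < u) (h1 : u < 1) :
    HasDerivAt (fun x : ℝ => 2 - 2*Real.sqrt (1-x^2) - (1+x)*Real.log (1+x) - (1-x)*Real.log (1-x))
      (-(2*(-(2*u)/(2*Real.sqrt (1-u^2)))) - (1*Real.log (1+u) + (1+u)*(1/(1+u)))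
        - (-1*Real.log (1-u) + (1-u)*(-(1/(1-u))))) u := by
  have hc : (0:ℝ) < 1 - u^2 := by nlinarith
  have h1u : (0:ℝ) < 1 + u := by linarith
  have h2u : (0:ℝ) < 1 - u := by linarith
  have hq : HasDerivAt (fun x : ℝ => 1 - x^2) (-(2*u)) u := by
    simpa using ((hasDerivAt_pow 2 u).const_sub 1)
  have hsqrt : HasDerivAt (fun x : ℝ => Real.sqrt (1-x^2)) (-(2*u)/(2*Real.sqrt (1-u^2))) u := by
    have := (Real.hasDerivAt_sqrt hc.ne').comp u hq
    simpa [Function.comp_def, div_eq_inv_mul, mul_comm] using this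
  have ha : HasDerivAt (fun x : ℝ => 1 + x) 1 u := by simpa using (hasDerivAt_id u).const_add (1:ℝ)
  have hb : HasDerivAt (fun x : ℝ => 1 - x) (-1) u := by simpa using (hasDerivAt_id u).const_sub (1:ℝ)
  have hlog1 : HasDerivAt (fun x : ℝ => Real.log (1+x)) (1/(1+u)) u := by
    simpa [Function.comp_def] using (Real.hasDerivAt_log h1u.ne').comp u ha
  have hlog2 : HasDerivAt (fun x : ℝ => Real.log (1-x)) (-(1/(1-u))) u := by
    simpa [Function.comp_def] using (Real.hasDerivAt_log h2u.ne').comp u hb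
  have t1 : HasDerivAt (fun x : ℝ => 2 - 2*Real.sqrt (1-x^2))
      (-(2*(-(2*u)/(2*Real.sqrt (1-u^2))))) u := by
    simpa using (hsqrt.const_mul (2:ℝ)).const_sub (2:ℝ)
  have t2 : HasDerivAt (fun x : ℝ => (1+x)*Real.log (1+x))
      (1*Real.log (1+u) + (1+u)*(1/(1+u))) u := ha.mul hlog1
  have t3 : HasDerivAt (fun x : ℝ => (1-x)*Real.log (1-x))
      (-1*Real.log (1-u) + (1-u)*(-(1/(1-u)))) u := hb.mul hlog2
  exact (t1.sub t2).sub t3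

lemma D_deriv_eq_G (u : ℝ) (h0 : 0 < u) (h1 : u < 1) :
    (-(2*(-(2*u)/(2*Real.sqrt (1-u^2)))) - (1*Real.log (1+u) + (1+u)*(1/(1+u)))
        - (-1*Real.log (1-u) + (1-u)*(-(1/(1-u)))))
      = 2*u/Real.sqrt (1-u^2) - Real.log (1+u) + Real.log (1-u) := by
  have hc : (0:ℝ) < 1 - u^2 := by nlinarith
  have hsc : 0 < Real.sqrt (1-u^2) := Real.sqrt_pos.2 hc
  have h1u : (0:ℝ) ≠ 1 + u := by intro h; linarith
  have h2u : (0:ℝ) ≠ 1 - u := by intro h; linarith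
  field_simp
  ring

lemma D_nonneg (u : ℝ) (h0 : 0 ≤ u) (h1 : u < 1) :
    0 ≤ 2 - 2*Real.sqrt (1-u^2) - (1+u)*Real.log (1+u) - (1-u)*Real.log (1-u) := by
  set D : ℝ → ℝ := fun x => 2 - 2*Real.sqrt (1-x^2) - (1+x)*Real.log (1+x) - (1-x)*Real.log (1-x) with hD
  have hcont : ContinuousOn D (Set.Ico 0 1) := by
    intro x hx
    obtain ⟨hx0, hx1⟩ := hx
    have hc : (0:ℝ) < 1 - x^2 := by nlinarith
    have h1u : (0:ℝ) < 1 + x := by linarith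
    have h2u : (0:ℝ) < 1 - x := by linarith
    apply ContinuousAt.continuousWithinAt
    have c1 : ContinuousAt (fun x : ℝ => Real.log (1+x)) x :=
      (Real.continuousAt_log h1u.ne').comp (by fun_prop)
    have c2 : ContinuousAt (fun x : ℝ => Real.log (1-x)) x :=
      (Real.continuousAt_log h2u.ne').comp (by fun_prop)
    have c3 : ContinuousAt (fun x : ℝ => Real.sqrt (1-x^2)) x :=
      (Real.continuous_sqrt.comp (by fun_prop)).continuousAt
    exact (((continuousAt_const.sub (c3.const_mul 2)).sub
      ((by fun_prop : ContinuousAt (fun x:ℝ => 1+x) x).mul c1)).sub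
      ((by fun_prop : ContinuousAt (fun x:ℝ => 1-x) x).mul c2))
  have hmono : MonotoneOn D (Set.Ico 0 1) := by
    apply monotoneOn_of_deriv_nonneg (convex_Ico 0 1) hcont
    · intro x hx
      rw [interior_Ico] at hx
      exact (hasDerivAt_D x hx.1 hx.2).differentiableAt.differentiableWithinAt
    · intro x hx
      rw [interior_Ico] at hx
      rw [(hasDerivAt_D x hx.1 hx.2).deriv, D_deriv_eq_G x hx.1 hx.2]
      exact G_nonneg x hx.1.le hx.2
  have h00 : D 0 = 0 := by simp [hD]
  have := hmono (Set.mem_Ico.2 ⟨le_refl 0, by norm_num⟩) (Set.mem_Ico.2 ⟨h0, h1⟩) h0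
  rw [h00] at this
  exact this

/-- KEY: for `u ∈ [0,1]`. -/
lemma key_ineq (u : ℝ) (h0 : 0 ≤ u) (h1 : u ≤ 1) :
    (1+u)*Real.log (1+u) + (1-u)*Real.log (1-u) ≤ 2 - 2*Real.sqrt (1-u^2) := by
  rcases eq_or_lt_of_le h1 with h | h
  · subst h
    simp only [sub_self, Real.log_zero, mul_zero, zero_mul, add_zero]
    have hl2 : Real.log 2 ≤ 1 := by
      have := Real.add_one_le_exp (Real.log 2)
      nlinarith [Real.exp_log (by norm_num : (0:ℝ) < 2), Real.log_nonneg (by norm_num : (1:ℝ) ≤ 2)]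
    have h11 : (1:ℝ)+1 = 2 := by norm_num
    rw [h11]
    have : Real.sqrt (1 - 1^2) = 0 := by norm_num
    rw [this]
    nlinarith [hl2]
  · have := D_nonneg u h0 h
    linarith

lemma two_point_aux (A B : ℝ) (hB : 0 ≤ B) (hAB : B ≤ A) :
    A*Real.log A + B*Real.log B - (A+B)*Real.log ((A+B)/2)
      ≤ (Real.sqrt A - Real.sqrt B)^2 := by
  have hA : 0 ≤ A := le_trans hB hAB
  rcases eq_or_lt_of_le hB with hB0 | hBpos
  · -- B = 0
    subst hB0
    simp only [zero_mul, add_zero, Real.sqrt_zero, sub_zero]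
    rcases eq_or_lt_of_le hA with hA0 | hApos
    · subst hA0; simp
    · have hlog : Real.log (A/2) = Real.log A - Real.log 2 :=
        Real.log_div hApos.ne' (by norm_num)
      rw [hlog, Real.sq_sqrt hA]
      have hl2 : Real.log 2 ≤ 1 := by
        have := Real.add_one_le_exp (Real.log 2)
        nlinarith [Real.exp_log (by norm_num : (0:ℝ) < 2), Real.log_nonneg (by norm_num : (1:ℝ) ≤ 2)]
      nlinarith [hApos, hl2]
  · -- B > 0
    have hApos : 0 < A := lt_of_lt_of_le hBpos hAB
    set s : ℝ := (A+B)/2 with hs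
    have hspos : 0 < s := by positivity
    set u : ℝ := (A-B)/(A+B) with hu
    have hABpos : 0 < A + B := by linarith
    have hu0 : 0 ≤ u := div_nonneg (by linarith) hABpos.le
    have hu1 : u < 1 := by
      rw [hu, div_lt_one hABpos]; linarith
    have hA' : A = s*(1+u) := by
      rw [hs, hu]; field_simp; ring
    have hB' : B = s*(1-u) := by
      rw [hs, hu]; field_simp; ring
    have h1u : (0:ℝ) < 1 + u := by linarith
    have h2u : (0:ℝ) < 1 - u := by linarith
    have hlogA : Real.log A = Real.log s + Real.log (1+u) := by
      rw [hA', Real.log_mul hspos.ne' h1u.ne']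
    have hlogB : Real.log B = Real.log s + Real.log (1-u) := by
      rw [hB', Real.log_mul hspos.ne' h2u.ne']
    have hLHS : A*Real.log A + B*Real.log B - (A+B)*Real.log ((A+B)/2)
        = s*((1+u)*Real.log (1+u) + (1-u)*Real.log (1-u)) := by
      rw [hlogA, hlogB, ← hs]
      rw [hA', hB']
      ring
    have hRHS : (Real.sqrt A - Real.sqrt B)^2 = s*(2 - 2*Real.sqrt (1-u^2)) := by
      have hsAB : Real.sqrt A * Real.sqrt B = Real.sqrt (A*B) := (Real.sqrt_mul hA B).symm
      have hABu : A*B = s^2*(1-u^2) := by rw [hA', hB']; ring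
      have hsqr : Real.sqrt (A*B) = s * Real.sqrt (1-u^2) := by
        rw [hABu, Real.sqrt_mul (sq_nonneg s), Real.sqrt_sq hspos.le]
      have e : (Real.sqrt A - Real.sqrt B)^2 = A + B - 2*(Real.sqrt A * Real.sqrt B) := by
        rw [sub_sq, Real.sq_sqrt hA, Real.sq_sqrt hB]; ring
      rw [e, hsAB, hsqr, hA', hB']
      ring
    rw [hLHS, hRHS]
    apply mul_le_mul_of_nonneg_left _ hspos.le
    exact key_ineq u hu0 hu1.le

lemma two_point (A B : ℝ) (hA : 0 ≤ A) (hB : 0 ≤ B) :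
    A*Real.log A + B*Real.log B - (A+B)*Real.log ((A+B)/2)
      ≤ (Real.sqrt A - Real.sqrt B)^2 := by
  rcases le_total B A with h | h
  · exact two_point_aux A B hB h
  · have := two_point_aux B A hA h
    calc A*Real.log A + B*Real.log B - (A+B)*Real.log ((A+B)/2)
        = B*Real.log B + A*Real.log A - (B+A)*Real.log ((B+A)/2) := by ring_nf
      _ ≤ (Real.sqrt B - Real.sqrt A)^2 := this
      _ = (Real.sqrt A - Real.sqrt B)^2 := by ring

end TPL


/-- extension of a `Fin`-vector to `ℕ` by zero -/
noncomputable def xv (M : ℕ) (l : Fin M → ℝ) : ℕ → ℝ :=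
  fun j => if h : j < M then l ⟨j, h⟩ else 0

lemma sum_univ_xv {M : ℕ} (l : Fin M → ℝ) (F : ℝ → ℝ) :
    ∑ x : Fin M, F (l x) = ∑ j ∈ Finset.range M, F (xv M l j) := by
  rw [← Fin.sum_univ_eq_sum_range (fun j => F (xv M l j)) M]
  refine Finset.sum_congr rfl fun x _ => ?_
  unfold xv
  rw [dif_pos x.isLt]

lemma Fh_eq_range {M : ℕ} (l : Fin M → ℝ) (k : ℕ) :
    Fh M l k = ∑ j ∈ Finset.range M, (xv M l j : ℂ) * ec M ((j:ℤ) * (k:ℤ)) := by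
  rw [Fh, ← Fin.sum_univ_eq_sum_range (fun j => ((xv M l j : ℝ) : ℂ) * ec M ((j:ℤ)*(k:ℤ))) M]
  refine Finset.sum_congr rfl fun x _ => ?_
  unfold xv
  rw [dif_pos x.isLt]

lemma sum_split_parity {α : Type*} [AddCommMonoid α] (N : ℕ) (f : ℕ → α) :
    ∑ j ∈ Finset.range (2*N), f j = ∑ r ∈ Finset.range N, (f (2*r) + f (2*r+1)) := by
  induction N with
  | zero => simp
  | succ n ih =>
    rw [show 2*(n+1) = 2*n + 1 + 1 by ring]
    rw [Finset.sum_range_succ, Finset.sum_range_succ, Finset.sum_range_succ, ih]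
    rw [add_assoc]

lemma sum_split_half {α : Type*} [AddCommMonoid α] (N : ℕ) (f : ℕ → α) :
    ∑ j ∈ Finset.range (2*N), f j
      = ∑ k ∈ Finset.range N, (f k + f (k+N)) := by
  rw [two_mul, Finset.sum_range_add, ← Finset.sum_add_distrib]
  refine Finset.sum_congr rfl fun k _ => ?_
  rw [add_comm N k]

lemma ec_two (N : ℕ) (hN : 0 < N) (t : ℤ) : ec (2*N) (2*t) = ec N t := by
  unfold ec
  congr 1
  have h1 : ((2*N:ℕ):ℂ) ≠ 0 := by exact_mod_cast (by omega : 2*N ≠ 0)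
  have h2 : ((N:ℕ):ℂ) ≠ 0 := by exact_mod_cast hN.ne'
  field_simp
  push_cast
  ring

lemma ec_mul_self (m : ℕ) (hm : 0 < m) (r : ℤ) : ec m (m * r) = 1 :=
  (ec_eq_one_iff m hm _).2 ⟨r, rfl⟩

lemma ec_half (N : ℕ) (hN : 0 < N) : ec (2*N) N = -1 := by
  unfold ec
  rw [show (2 * (Real.pi:ℂ) * Complex.I * (N:ℤ) / ((2*N:ℕ):ℂ)) = Real.pi * Complex.I from ?_]
  · exact Complex.exp_pi_mul_I
  · have h1 : ((2*N:ℕ):ℂ) = 2*(N:ℂ) := by push_cast; ring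
    have h2 : ((N:ℕ):ℂ) ≠ 0 := by exact_mod_cast hN.ne'
    rw [h1]
    field_simp
    simp

lemma normSq_ec (m : ℕ) (t : ℤ) : Complex.normSq (ec m t) = 1 := by
  unfold ec
  rw [show ((2:ℂ) * Real.pi * Complex.I * t / m) = (((2:ℝ) * Real.pi * t / m : ℝ):ℂ) * Complex.I by push_cast; ring]
  rw [← Complex.sq_norm, Complex.norm_exp_ofReal_mul_I]
  norm_num

section doubling
variable {N : ℕ}

/-- even part -/
noncomputable def evp (N : ℕ) (l : Fin (2*N) → ℝ) : Fin N → ℝ :=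
  fun r => l ⟨2*r.1, by have := r.isLt; omega⟩
/-- odd part -/
noncomputable def odp (N : ℕ) (l : Fin (2*N) → ℝ) : Fin N → ℝ :=
  fun r => l ⟨2*r.1+1, by have := r.isLt; omega⟩

lemma xv_even (l : Fin (2*N) → ℝ) (r : ℕ) (hr : r < N) :
    xv (2*N) l (2*r) = xv N (evp N l) r := by
  unfold xv evp
  rw [dif_pos (by omega : 2*r < 2*N), dif_pos hr]

lemma xv_odd (l : Fin (2*N) → ℝ) (r : ℕ) (hr : r < N) :
    xv (2*N) l (2*r+1) = xv N (odp N l) r := by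
  unfold xv odp
  rw [dif_pos (by omega : 2*r+1 < 2*N), dif_pos hr]

lemma Fh_double_lo (hN : 0 < N) (l : Fin (2*N) → ℝ) (k : ℕ) :
    Fh (2*N) l k = Fh N (evp N l) k + ec (2*N) k * Fh N (odp N l) k := by
  rw [Fh_eq_range, Fh_eq_range, Fh_eq_range, sum_split_parity, Finset.mul_sum,
    ← Finset.sum_add_distrib]
  refine Finset.sum_congr rfl fun r hr => ?_
  have hrN := Finset.mem_range.1 hr
  rw [xv_even l r hrN, xv_odd l r hrN]
  have e1 : ec (2*N) (((2*r:ℕ):ℤ) * (k:ℤ)) = ec N ((r:ℤ)*(k:ℤ)) := by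
    rw [show (((2*r:ℕ):ℤ) * (k:ℤ)) = 2*((r:ℤ)*(k:ℤ)) by push_cast; ring]
    exact ec_two N hN _
  have e2 : ec (2*N) (((2*r+1:ℕ):ℤ) * (k:ℤ)) = ec N ((r:ℤ)*(k:ℤ)) * ec (2*N) k := by
    rw [show (((2*r+1:ℕ):ℤ) * (k:ℤ)) = 2*((r:ℤ)*(k:ℤ)) + (k:ℤ) by push_cast; ring]
    rw [ec_add, ec_two N hN]
  rw [e1, e2]
  ring

lemma Fh_double_hi (hN : 0 < N) (l : Fin (2*N) → ℝ) (k : ℕ) :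
    Fh (2*N) l (k+N) = Fh N (evp N l) k - ec (2*N) k * Fh N (odp N l) k := by
  rw [Fh_eq_range, Fh_eq_range, Fh_eq_range, sum_split_parity, Finset.mul_sum,
    ← Finset.sum_sub_distrib]
  refine Finset.sum_congr rfl fun r hr => ?_
  have hrN := Finset.mem_range.1 hr
  rw [xv_even l r hrN, xv_odd l r hrN]
  have e1 : ec (2*N) (((2*r:ℕ):ℤ) * ((k+N:ℕ):ℤ)) = ec N ((r:ℤ)*(k:ℤ)) := by
    rw [show (((2*r:ℕ):ℤ) * ((k+N:ℕ):ℤ)) = 2*((r:ℤ)*(k:ℤ)) + (2*N)*(r:ℤ) by push_cast; ring]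
    rw [ec_add, ec_two N hN, show ((2*N:ℤ)) = ((2*N:ℕ):ℤ) by push_cast; ring,
      ec_mul_self (2*N) (by omega) _]
    ring
  have e2 : ec (2*N) (((2*r+1:ℕ):ℤ) * ((k+N:ℕ):ℤ))
      = -(ec N ((r:ℤ)*(k:ℤ)) * ec (2*N) k) := by
    rw [show (((2*r+1:ℕ):ℤ) * ((k+N:ℕ):ℤ))
        = (2*((r:ℤ)*(k:ℤ)) + (k:ℤ)) + ((2*N)*(r:ℤ) + (N:ℤ)) by push_cast; ring]
    rw [ec_add, ec_add, ec_two N hN, ec_add,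
      show ((2*N:ℤ)) = ((2*N:ℕ):ℤ) by push_cast; ring,
      ec_mul_self (2*N) (by omega) _, ec_half N hN]
    ring
  rw [e1, e2]
  ring

end doubling

lemma parseval (M : ℕ) (hM : 0 < M) (l : Fin M → ℝ) :
    ∑ k ∈ Finset.range M, Complex.normSq (Fh M l k)
      = M * ∑ x : Fin M, (l x)^2 := by
  have key : ∑ k ∈ Finset.range M, (Fh M l k * (starRingEnd ℂ) (Fh M l k))
      = (M:ℂ) * ∑ x : Fin M, ((l x:ℝ):ℂ)^2 := by
    have hconj : ∀ k : ℕ, (starRingEnd ℂ) (Fh M l k) = ∑ i : Fin M, (l i : ℂ) * ec M (-((i:ℤ)*(k:ℤ))) := by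
      intro k
      rw [Fh, map_sum]
      refine Finset.sum_congr rfl fun i _ => ?_
      rw [map_mul, Complex.conj_ofReal, ec_conj]
    calc ∑ k ∈ Finset.range M, (Fh M l k * (starRingEnd ℂ) (Fh M l k))
        = ∑ k ∈ Finset.range M, ∑ j : Fin M, ∑ i : Fin M,
            (l j : ℂ) * (l i : ℂ) * ec M (((j:ℤ)-(i:ℤ))*(k:ℤ)) := by
          refine Finset.sum_congr rfl fun k _ => ?_
          rw [hconj, Fh, Finset.sum_mul_sum]
          refine Finset.sum_congr rfl fun j _ => Finset.sum_congr rfl fun i _ => ?_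
          rw [show (((j:ℤ)-(i:ℤ))*(k:ℤ)) = (j:ℤ)*(k:ℤ) + (-((i:ℤ)*(k:ℤ))) by ring, ec_add]
          ring
      _ = ∑ j : Fin M, ∑ i : Fin M,
            (l j : ℂ) * (l i : ℂ) * (∑ k ∈ Finset.range M, ec M (((j:ℤ)-(i:ℤ))*(k:ℤ))) := by
          rw [Finset.sum_comm]
          refine Finset.sum_congr rfl fun j _ => ?_
          rw [Finset.sum_comm]
          refine Finset.sum_congr rfl fun i _ => ?_
          rw [Finset.mul_sum]
      _ = (M:ℂ) * ∑ x : Fin M, ((l x:ℝ):ℂ)^2 := by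
          rw [Finset.mul_sum]
          rw [Finset.sum_congr rfl (fun j (_ : j ∈ Finset.univ) => Finset.sum_congr rfl
            (fun i (_ : i ∈ Finset.univ) => by rw [sum_ec M hM _]))]
          refine Finset.sum_congr rfl fun j _ => ?_
          rw [Finset.sum_eq_single j]
          · have : ((M:ℤ) ∣ ((j:ℤ) - (j:ℤ))) := by simp
            rw [if_pos this]
            ring
          · intro i _ hij
            have : ¬ ((M:ℤ) ∣ ((j:ℤ) - (i:ℤ))) := by
              have hj := j.isLt; have hi := i.isLt
              have h1 : (j:ℤ) - (i:ℤ) ≠ 0 := by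
                simp only [sub_ne_zero]
                exact_mod_cast fun h => hij.symm (Fin.ext (by exact_mod_cast h))
              intro hd
              have h2 : |(j:ℤ) - (i:ℤ)| < M := by
                rw [abs_sub_lt_iff]
                constructor <;> push_cast <;> omega
              have := Int.le_of_dvd (abs_pos.2 h1) ((dvd_abs _ _).mpr hd)
              omega
            rw [if_neg this, mul_zero]
          · intro h; exact absurd (Finset.mem_univ j) h
  have lhs_eq : (((∑ k ∈ Finset.range M, Complex.normSq (Fh M l k)):ℝ):ℂ)
      = ∑ k ∈ Finset.range M, (Fh M l k * (starRingEnd ℂ) (Fh M l k)) := by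
    push_cast
    refine Finset.sum_congr rfl fun k _ => ?_
    rw [Complex.mul_conj]
  have rhs_eq : (((M:ℝ) * ∑ x : Fin M, (l x)^2 : ℝ):ℂ) = (M:ℂ) * ∑ x : Fin M, ((l x:ℝ):ℂ)^2 := by
    push_cast
    ring
  have := lhs_eq.trans (key.trans rhs_eq.symm)
  exact_mod_cast this

lemma rev_triangle (N : ℕ) (p q : ℕ → ℝ) (hp : ∀ k, 0 ≤ p k) (hq : ∀ k, 0 ≤ q k) :
    (Real.sqrt (∑ k ∈ Finset.range N, (p k)^2) - Real.sqrt (∑ k ∈ Finset.range N, (q k)^2))^2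
      ≤ ∑ k ∈ Finset.range N, (p k - q k)^2 := by
  set P := ∑ k ∈ Finset.range N, (p k)^2 with hP
  set Q := ∑ k ∈ Finset.range N, (q k)^2 with hQ
  have hPn : 0 ≤ P := Finset.sum_nonneg fun k _ => sq_nonneg _
  have hQn : 0 ≤ Q := Finset.sum_nonneg fun k _ => sq_nonneg _
  have hcs : (∑ k ∈ Finset.range N, p k * q k)^2 ≤ P * Q := by
    rw [hP, hQ]
    exact Finset.sum_mul_sq_le_sq_mul_sq _ _ _
  have hpq0 : 0 ≤ ∑ k ∈ Finset.range N, p k * q k :=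
    Finset.sum_nonneg fun k _ => mul_nonneg (hp k) (hq k)
  have hcs' : ∑ k ∈ Finset.range N, p k * q k ≤ Real.sqrt P * Real.sqrt Q := by
    rw [← Real.sqrt_mul hPn]
    have := Real.le_sqrt hpq0 (mul_nonneg hPn hQn)
    exact this.2 hcs
  have hexp : ∑ k ∈ Finset.range N, (p k - q k)^2
      = P + Q - 2*(∑ k ∈ Finset.range N, p k * q k) := by
    rw [hP, hQ, Finset.mul_sum, ← Finset.sum_add_distrib, ← Finset.sum_sub_distrib]
    refine Finset.sum_congr rfl fun k _ => by ring
  have hsq : (Real.sqrt P - Real.sqrt Q)^2 = P + Q - 2*(Real.sqrt P * Real.sqrt Q) := by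
    rw [sub_sq, Real.sq_sqrt hPn, Real.sq_sqrt hQn]
    ring
  rw [hexp, hsq]
  linarith

end LSIAux


namespace LSIAux
open Complex Finset

lemma ec_zero (m : ℕ) : ec m 0 = 1 := by
  unfold ec; simp

lemma nsq_par (z w : ℂ) :
    Complex.normSq (z + w) + Complex.normSq (z - w)
      = 2*Complex.normSq z + 2*Complex.normSq w := by
  simp only [Complex.normSq_apply, Complex.add_re, Complex.add_im, Complex.sub_re, Complex.sub_im]
  ring

lemma abs_diff_sq_le_sub (z w : ℂ) :
    (‖z‖ - ‖w‖)^2 ≤ Complex.normSq (z - w) := by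
  have h1 : |‖z‖ - ‖w‖| ≤ ‖(z - w)‖ := by
    exact abs_norm_sub_norm_le z w
  have h2 : (‖z‖ - ‖w‖)^2 = |‖z‖ - ‖w‖|^2 := (_root_.sq_abs _).symm
  rw [h2, ← Complex.sq_norm]
  exact pow_le_pow_left₀ (abs_nonneg _) h1 2

lemma abs_diff_sq_le_add (z w : ℂ) :
    (‖z‖ - ‖w‖)^2 ≤ Complex.normSq (z + w) := by
  have := abs_diff_sq_le_sub z (-w)
  simpa using this

lemma abs_ec_mul (m : ℕ) (t : ℤ) (w : ℂ) : ‖(ec m t * w)‖ = ‖w‖ := by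
  rw [norm_mul]
  have h1 : ‖(ec m t)‖ = 1 := by
    have h := normSq_ec m t
    have := Complex.sq_norm (ec m t)
    nlinarith [norm_nonneg (ec m t)]
  rw [h1, one_mul]

lemma normSq_ec_mul (m : ℕ) (t : ℤ) (w : ℂ) :
    Complex.normSq (ec m t * w) = Complex.normSq w := by
  rw [map_mul, normSq_ec, one_mul]

/-- unnormalized Fourier energy -/
noncomputable def En (M : ℕ) (l : Fin M → ℝ) : ℝ :=
  ∑ k ∈ Finset.range M, psiLen M k * Complex.normSq (Fh M l k)

/-- middle-frequency reserve -/
noncomputable def resv (M : ℕ) (l : Fin M → ℝ) : ℝ :=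
  if 2 ∣ M then Complex.normSq (Fh M l (M/2)) else 0

/-- strengthened LSI statement -/
def Tstat (M : ℕ) : Prop :=
  ∀ l : Fin M → ℝ, (∀ j, 0 ≤ l j) →
    (M:ℝ)^2 * entH M l + resv M l ≤ 2 * En M l

lemma resv_nonneg (M : ℕ) (l : Fin M → ℝ) : 0 ≤ resv M l := by
  unfold resv
  split
  · exact Complex.normSq_nonneg _
  · exact le_refl 0

lemma psiLen_lo (N k : ℕ) (h : 2*k ≤ N) : psiLen N k = (k:ℝ) := by
  unfold psiLen
  exact min_eq_left (by exact_mod_cast (by omega : k ≤ N - k))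

lemma psiLen_hi (N k : ℕ) (h : N ≤ 2*k) : psiLen N k = ((N-k:ℕ):ℝ) := by
  unfold psiLen
  exact min_eq_right (by exact_mod_cast (by omega : N - k ≤ k))

section Doubling
variable (N : ℕ)

lemma ent_split (hN : 0 < N) (l : Fin (2*N) → ℝ) :
    ((2*N:ℕ):ℝ)^2 * entH (2*N) l
      = 2*(N:ℝ)^2*entH N (evp N l) + 2*(N:ℝ)^2*entH N (odp N l)
        + 2*(N:ℝ)*((∑ x : Fin N, (evp N l x)^2) * Real.log ((∑ x : Fin N, (evp N l x)^2)/(N:ℝ))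
          + (∑ x : Fin N, (odp N l x)^2) * Real.log ((∑ x : Fin N, (odp N l x)^2)/(N:ℝ))
          - ((∑ x : Fin N, (evp N l x)^2) + (∑ x : Fin N, (odp N l x)^2))
              * Real.log (((∑ x : Fin N, (evp N l x)^2) + (∑ x : Fin N, (odp N l x)^2))/(2*(N:ℝ)))) := by
  have hc : ((2*N:ℕ):ℝ) = 2*(N:ℝ) := by push_cast; ring
  have hNne : (N:ℝ) ≠ 0 := by exact_mod_cast hN.ne'
  have hsum2 : ∀ F : ℝ → ℝ, ∑ x : Fin (2*N), F (l x)
      = ∑ x : Fin N, F (evp N l x) + ∑ x : Fin N, F (odp N l x) := by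
    intro F
    rw [sum_univ_xv l F, sum_split_parity, sum_univ_xv (evp N l) F, sum_univ_xv (odp N l) F,
      ← Finset.sum_add_distrib]
    refine Finset.sum_congr rfl fun r hr => ?_
    have hrN := Finset.mem_range.1 hr
    rw [xv_even l r hrN, xv_odd l r hrN]
  have hP2 : ∑ x : Fin (2*N), (l x)^2 * Real.log ((l x)^2)
      = (∑ x : Fin N, (evp N l x)^2*Real.log ((evp N l x)^2))
        + ∑ x : Fin N, (odp N l x)^2*Real.log ((odp N l x)^2) :=
    hsum2 (fun t => t^2 * Real.log (t^2))
  have hS2 : ∑ x : Fin (2*N), (l x)^2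
      = (∑ x : Fin N, (evp N l x)^2) + ∑ x : Fin N, (odp N l x)^2 :=
    hsum2 (fun t => t^2)
  unfold entH
  rw [hP2, hS2, hc]
  set Sa := ∑ x : Fin N, (evp N l x)^2 with hSa
  set Sb := ∑ x : Fin N, (odp N l x)^2 with hSb
  set Pa := ∑ x : Fin N, (evp N l x)^2*Real.log ((evp N l x)^2) with hPa
  set Pb := ∑ x : Fin N, (odp N l x)^2*Real.log ((odp N l x)^2) with hPb
  set L0 := Real.log ((Sa + Sb)/(2*(N:ℝ))) with hL0
  set La := Real.log (Sa/(N:ℝ)) with hLa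
  set Lb := Real.log (Sb/(N:ℝ)) with hLb
  field_simp
  ring

lemma energy_split (hN : 0 < N) (l : Fin (2*N) → ℝ) :
    En (2*N) l = ∑ k ∈ Finset.range N,
      ((k:ℝ) * Complex.normSq (Fh (2*N) l k) + ((N-k:ℕ):ℝ) * Complex.normSq (Fh (2*N) l (k+N))) := by
  unfold En
  rw [sum_split_half N (fun K => psiLen (2*N) K * Complex.normSq (Fh (2*N) l K))]
  refine Finset.sum_congr rfl fun k hk => ?_
  have hkN := Finset.mem_range.1 hk
  have e1 : psiLen (2*N) k = (k:ℝ) := psiLen_lo (2*N) k (by omega)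
  have e2 : psiLen (2*N) (k+N) = ((N-k:ℕ):ℝ) := by
    rw [psiLen_hi (2*N) (k+N) (by omega)]
    congr 1
    omega
  rw [e1, e2]

lemma perk (hN3 : 3 ≤ N) (l : Fin (2*N) → ℝ) :
    ∀ k ∈ Finset.range N,
      2*(‖(Fh N (evp N l) k)‖ - ‖(Fh N (odp N l) k)‖)^2
        + (if k = 0 then Complex.normSq (Fh (2*N) l N) else 0)
        + 4*psiLen N k*(Complex.normSq (Fh N (evp N l) k) + Complex.normSq (Fh N (odp N l) k))
      ≤ 2*((k:ℝ) * Complex.normSq (Fh (2*N) l k) + ((N-k:ℕ):ℝ) * Complex.normSq (Fh (2*N) l (k+N)))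
        + (if 2 ∣ N ∧ k = N/2 then
            2*(Complex.normSq (Fh N (evp N l) (N/2)) + Complex.normSq (Fh N (odp N l) (N/2))) else 0) := by
  intro k hk
  have hN : 0 < N := by omega
  have hkN := Finset.mem_range.1 hk
  set z := Fh N (evp N l) k with hz
  set w := Fh N (odp N l) k with hw
  set x := ‖z‖ with hx
  set y := ‖w‖ with hy
  have hu : Fh (2*N) l k = z + ec (2*N) k * w := Fh_double_lo hN l k
  have hv : Fh (2*N) l (k+N) = z - ec (2*N) k * w := Fh_double_hi hN l k
  have hpar : Complex.normSq (Fh (2*N) l k) + Complex.normSq (Fh (2*N) l (k+N))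
      = 2*Complex.normSq z + 2*Complex.normSq w := by
    rw [hu, hv, nsq_par, normSq_ec_mul]
  have hxu : (x - y)^2 ≤ Complex.normSq (Fh (2*N) l k) := by
    rw [hu]
    have h := abs_diff_sq_le_add z (ec (2*N) k * w)
    rwa [abs_ec_mul] at h
  have hxv : (x - y)^2 ≤ Complex.normSq (Fh (2*N) l (k+N)) := by
    rw [hv]
    have h := abs_diff_sq_le_sub z (ec (2*N) k * w)
    rwa [abs_ec_mul] at h
  have hx2 : Complex.normSq z = x^2 := (Complex.sq_norm z).symm
  have hy2 : Complex.normSq w = y^2 := (Complex.sq_norm w).symm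
  have hu0 : 0 ≤ Complex.normSq (Fh (2*N) l k) := Complex.normSq_nonneg _
  have hv0 : 0 ≤ Complex.normSq (Fh (2*N) l (k+N)) := Complex.normSq_nonneg _
  have hx0 : 0 ≤ x := norm_nonneg z
  have hy0 : 0 ≤ y := norm_nonneg w
  have hiteR : (0:ℝ) ≤ (if 2 ∣ N ∧ k = N/2 then
      2*(Complex.normSq (Fh N (evp N l) (N/2)) + Complex.normSq (Fh N (odp N l) (N/2))) else 0) := by
    split
    · have h1 := Complex.normSq_nonneg (Fh N (evp N l) (N/2))
      have h2 := Complex.normSq_nonneg (Fh N (odp N l) (N/2))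
      linarith
    · exact le_refl 0
  rcases Nat.eq_zero_or_pos k with hk0 | hkpos
  · subst hk0
    rw [if_pos rfl]
    have hpsi0 : psiLen N 0 = 0 := by
      rw [psiLen_lo N 0 (by omega)]; norm_num
    have h0N : (0:ℕ) + N = N := by omega
    rw [h0N] at hxv hv0 hpar
    have hN3R : (3:ℝ) ≤ (N:ℝ) := by exact_mod_cast hN3
    have hNsub : ((N-0:ℕ):ℝ) = (N:ℝ) := by norm_num
    rw [hpsi0, h0N, hNsub]
    push_cast
    nlinarith [hxv, hv0, hN3R, hu0, hiteR]
  · by_cases hmid : 2*k = N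
    · have hdvd : 2 ∣ N := ⟨k, hmid.symm⟩
      have hN2 : N/2 = k := by omega
      rw [if_neg (by omega : ¬ k = 0), if_pos ⟨hdvd, hN2.symm⟩, hN2]
      have hpsik : psiLen N k = (k:ℝ) := psiLen_lo N k (by omega)
      have hcast : ((N-k:ℕ):ℝ) = (k:ℝ) := by
        have h : N - k = k := by omega
        rw [h]
      rw [hpsik, hcast, ← hz, ← hw]
      nlinarith [hpar, mul_nonneg hx0 hy0, Nat.cast_nonneg (α := ℝ) k, hu0, hv0, hx2, hy2]
    · rw [if_neg (by omega : ¬ k = 0), if_neg (by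
        rintro ⟨⟨c, hc⟩, hk2⟩
        omega)]
      have hkle : k ≤ N := by omega
      have hcast : ((N-k:ℕ):ℝ) = (N:ℝ) - (k:ℝ) := Nat.cast_sub hkle
      rcases Nat.lt_or_ge (2*k) N with hlt | hge
      · have hpsik : psiLen N k = (k:ℝ) := psiLen_lo N k (by omega)
        rw [hpsik, hcast]
        have hc1 : (1:ℝ) ≤ (N:ℝ) - 2*(k:ℝ) := by
          have : (2*k+1 : ℕ) ≤ N := by omega
          have := (Nat.cast_le (α := ℝ)).2 this
          push_cast at this
          linarith
        nlinarith [hpar, hxv, hv0, hu0, hx2, hy2, Nat.cast_nonneg (α := ℝ) k,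
          mul_nonneg (by linarith : (0:ℝ) ≤ (N:ℝ) - 2*(k:ℝ) - 1) hv0]
      · have hgt : N < 2*k := by omega
        have hpsik : psiLen N k = ((N-k:ℕ):ℝ) := psiLen_hi N k (by omega)
        rw [hpsik, hcast]
        have hc1 : (1:ℝ) ≤ 2*(k:ℝ) - (N:ℝ) := by
          have : (N+1 : ℕ) ≤ 2*k := by omega
          have := (Nat.cast_le (α := ℝ)).2 this
          push_cast at this
          linarith
        have hkleR : (k:ℝ) ≤ (N:ℝ) := by exact_mod_cast hkle
        nlinarith [hpar, hxu, hv0, hu0, hx2, hy2, Nat.cast_nonneg (α := ℝ) k,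
          mul_nonneg (by linarith : (0:ℝ) ≤ 2*(k:ℝ) - (N:ℝ) - 1) hu0]

lemma tp_step (hN : 0 < N) (a b : Fin N → ℝ) :
    2*(N:ℝ)*((∑ x : Fin N, (a x)^2) * Real.log ((∑ x : Fin N, (a x)^2)/(N:ℝ))
          + (∑ x : Fin N, (b x)^2) * Real.log ((∑ x : Fin N, (b x)^2)/(N:ℝ))
          - ((∑ x : Fin N, (a x)^2) + (∑ x : Fin N, (b x)^2))
              * Real.log (((∑ x : Fin N, (a x)^2) + (∑ x : Fin N, (b x)^2))/(2*(N:ℝ))))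
      ≤ 2*(∑ k ∈ Finset.range N, (‖(Fh N a k)‖ - ‖(Fh N b k)‖)^2) := by
  have hNne : (N:ℝ) ≠ 0 := by exact_mod_cast hN.ne'
  have hN0 : (0:ℝ) ≤ (N:ℝ) := Nat.cast_nonneg N
  set Sa := ∑ x : Fin N, (a x)^2 with hSadef
  set Sb := ∑ x : Fin N, (b x)^2 with hSbdef
  have hSa0 : 0 ≤ Sa := Finset.sum_nonneg fun _ _ => sq_nonneg _
  have hSb0 : 0 ≤ Sb := Finset.sum_nonneg fun _ _ => sq_nonneg _
  have htp := two_point (Sa/(N:ℝ)) (Sb/(N:ℝ)) (div_nonneg hSa0 hN0) (div_nonneg hSb0 hN0)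
  have harg : (Sa/(N:ℝ) + Sb/(N:ℝ))/2 = (Sa+Sb)/(2*(N:ℝ)) := by
    rw [← add_div, div_div, mul_comm]
  have hhh : Sa * Real.log (Sa/(N:ℝ)) + Sb * Real.log (Sb/(N:ℝ))
        - (Sa + Sb) * Real.log ((Sa+Sb)/(2*(N:ℝ)))
      = (N:ℝ) * ((Sa/(N:ℝ))*Real.log (Sa/(N:ℝ)) + (Sb/(N:ℝ))*Real.log (Sb/(N:ℝ))
          - (Sa/(N:ℝ) + Sb/(N:ℝ))*Real.log ((Sa/(N:ℝ) + Sb/(N:ℝ))/2)) := by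
    rw [harg]
    field_simp
  have hsA : Real.sqrt (N:ℝ) * Real.sqrt (Sa/(N:ℝ)) = Real.sqrt Sa := by
    rw [← Real.sqrt_mul hN0]
    congr 1
    field_simp
  have hsB : Real.sqrt (N:ℝ) * Real.sqrt (Sb/(N:ℝ)) = Real.sqrt Sb := by
    rw [← Real.sqrt_mul hN0]
    congr 1
    field_simp
  have hfour : (N:ℝ) * ((Real.sqrt (Sa/(N:ℝ)) - Real.sqrt (Sb/(N:ℝ)))^2)
      = (Real.sqrt Sa - Real.sqrt Sb)^2 := by
    rw [← hsA, ← hsB]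
    have e : (Real.sqrt (N:ℝ)*Real.sqrt (Sa/(N:ℝ)) - Real.sqrt (N:ℝ)*Real.sqrt (Sb/(N:ℝ)))^2
        = (Real.sqrt (N:ℝ))^2*((Real.sqrt (Sa/(N:ℝ)) - Real.sqrt (Sb/(N:ℝ)))^2) := by ring
    rw [e, Real.sq_sqrt hN0]
  have hpa : ∑ k ∈ Finset.range N, (‖(Fh N a k)‖)^2 = (N:ℝ) * Sa := by
    calc ∑ k ∈ Finset.range N, (‖(Fh N a k)‖)^2
        = ∑ k ∈ Finset.range N, Complex.normSq (Fh N a k) := by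
          exact Finset.sum_congr rfl fun k _ => Complex.sq_norm _
      _ = (N:ℝ) * Sa := parseval N hN a
  have hpb : ∑ k ∈ Finset.range N, (‖(Fh N b k)‖)^2 = (N:ℝ) * Sb := by
    calc ∑ k ∈ Finset.range N, (‖(Fh N b k)‖)^2
        = ∑ k ∈ Finset.range N, Complex.normSq (Fh N b k) := by
          exact Finset.sum_congr rfl fun k _ => Complex.sq_norm _
      _ = (N:ℝ) * Sb := parseval N hN b
  have hrt := rev_triangle N (fun k => ‖(Fh N a k)‖) (fun k => ‖(Fh N b k)‖)
    (fun k => norm_nonneg _) (fun k => norm_nonneg _)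
  rw [hpa, hpb] at hrt
  have hNm : Real.sqrt ((N:ℝ)*Sa) = Real.sqrt (N:ℝ) * Real.sqrt Sa := Real.sqrt_mul hN0 Sa
  have hNm' : Real.sqrt ((N:ℝ)*Sb) = Real.sqrt (N:ℝ) * Real.sqrt Sb := Real.sqrt_mul hN0 Sb
  rw [hNm, hNm'] at hrt
  have hrt2 : (N:ℝ) * (Real.sqrt Sa - Real.sqrt Sb)^2
      ≤ ∑ k ∈ Finset.range N, (‖(Fh N a k)‖ - ‖(Fh N b k)‖)^2 := by
    have e : (Real.sqrt (N:ℝ)*Real.sqrt Sa - Real.sqrt (N:ℝ)*Real.sqrt Sb)^2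
        = (Real.sqrt (N:ℝ))^2*((Real.sqrt Sa - Real.sqrt Sb)^2) := by ring
    rw [e, Real.sq_sqrt hN0] at hrt
    exact hrt
  have hE_le : Sa * Real.log (Sa/(N:ℝ)) + Sb * Real.log (Sb/(N:ℝ))
        - (Sa + Sb) * Real.log ((Sa+Sb)/(2*(N:ℝ)))
      ≤ (Real.sqrt Sa - Real.sqrt Sb)^2 := by
    rw [hhh, ← hfour]
    exact mul_le_mul_of_nonneg_left htp hN0
  nlinarith [hrt2, mul_le_mul_of_nonneg_left hE_le (by linarith : (0:ℝ) ≤ 2*(N:ℝ))]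

lemma doubling (hN3 : 3 ≤ N) (hT : Tstat N) : Tstat (2*N) := by
  intro l hl
  have hN : 0 < N := by omega
  have hNne : (N:ℝ) ≠ 0 := by exact_mod_cast hN.ne'
  have hent := ent_split N hN l
  have hTa := hT (evp N l) (fun r => hl _)
  have hTb := hT (odp N l) (fun r => hl _)
  have hEsplit := energy_split N hN l
  have hperk := perk N hN3 l
  have hsum_le := Finset.sum_le_sum hperk
  -- L.H.S. sum decomposition
  have hL : ∑ k ∈ Finset.range N,
      (2*(‖(Fh N (evp N l) k)‖ - ‖(Fh N (odp N l) k)‖)^2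
        + (if k = 0 then Complex.normSq (Fh (2*N) l N) else 0)
        + 4*psiLen N k*(Complex.normSq (Fh N (evp N l) k) + Complex.normSq (Fh N (odp N l) k)))
      = 2*(∑ k ∈ Finset.range N,
            (‖(Fh N (evp N l) k)‖ - ‖(Fh N (odp N l) k)‖)^2)
        + Complex.normSq (Fh (2*N) l N)
        + (4*En N (evp N l) + 4*En N (odp N l)) := by
    rw [Finset.sum_add_distrib, Finset.sum_add_distrib]
    congr 1
    · congr 1
      · rw [Finset.mul_sum]
      · rw [Finset.sum_ite_eq' (Finset.range N) 0
          (fun _ => Complex.normSq (Fh (2*N) l N))]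
        rw [if_pos (Finset.mem_range.2 hN)]
    · unfold En
      rw [Finset.mul_sum, Finset.mul_sum, ← Finset.sum_add_distrib]
      refine Finset.sum_congr rfl fun k _ => by ring
  -- R.H.S. sum decomposition
  have hR : ∑ k ∈ Finset.range N,
      (2*((k:ℝ) * Complex.normSq (Fh (2*N) l k) + ((N-k:ℕ):ℝ) * Complex.normSq (Fh (2*N) l (k+N)))
        + (if 2 ∣ N ∧ k = N/2 then
            2*(Complex.normSq (Fh N (evp N l) (N/2)) + Complex.normSq (Fh N (odp N l) (N/2))) else 0))
      = 2*En (2*N) l + (2*resv N (evp N l) + 2*resv N (odp N l)) := by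
    rw [Finset.sum_add_distrib]
    congr 1
    · rw [hEsplit, Finset.mul_sum]
    · unfold resv
      by_cases hev : 2 ∣ N
      · simp only [hev, true_and, if_true]
        rw [Finset.sum_ite_eq' (Finset.range N)  (N/2)
          (fun _ => 2*(Complex.normSq (Fh N (evp N l) (N/2)) + Complex.normSq (Fh N (odp N l) (N/2))))]
        rw [if_pos (Finset.mem_range.2 (by omega))]
        ring
      · simp only [hev, false_and, if_false]
        simp
  rw [hL, hR] at hsum_le
  -- two-point step
  have h3 : 2*(N:ℝ)*((∑ x : Fin N, (evp N l x)^2) * Real.log ((∑ x : Fin N, (evp N l x)^2)/(N:ℝ))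
          + (∑ x : Fin N, (odp N l x)^2) * Real.log ((∑ x : Fin N, (odp N l x)^2)/(N:ℝ))
          - ((∑ x : Fin N, (evp N l x)^2) + (∑ x : Fin N, (odp N l x)^2))
              * Real.log (((∑ x : Fin N, (evp N l x)^2) + (∑ x : Fin N, (odp N l x)^2))/(2*(N:ℝ))))
      ≤ 2*(∑ k ∈ Finset.range N,
            (‖(Fh N (evp N l) k)‖ - ‖(Fh N (odp N l) k)‖)^2) :=
    tp_step N hN (evp N l) (odp N l)
  -- final assembly
  unfold Tstat at *
  have hres2N : resv (2*N) l = Complex.normSq (Fh (2*N) l N) := by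
    unfold resv
    have hdvd : (2:ℕ) ∣ 2*N := Dvd.intro N rfl
    rw [if_pos hdvd, Nat.mul_div_cancel_left N (by norm_num : 0 < 2)]
  rw [hres2N]
  linarith [hent, hTa, hTb, h3, hsum_le, resv_nonneg N (evp N l), resv_nonneg N (odp N l)]


end Doubling

lemma base_case (n₀ : ℕ) (h3 : 3 ≤ n₀) (hodd : Odd n₀)
    (hLSI : ∀ l : Fin n₀ → ℝ, (∀ j, 0 ≤ l j) →
      ((entH n₀ l : ℝ) : ℂ) ≤ 2 * quadForm n₀ (PsiMat n₀) l) : Tstat n₀ := by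
  intro l hl
  have hpos : 0 < n₀ := by omega
  have hne : (n₀:ℝ) ≠ 0 := by exact_mod_cast hpos.ne'
  have hc := hLSI l hl
  rw [show PsiMat n₀ = GammaMat n₀ (fun k => psiLen n₀ k) from rfl,
    quadForm_eq_fourier n₀ hpos (fun k => psiLen n₀ k) l] at hc
  have hresv : resv n₀ l = 0 := by
    unfold resv
    rw [if_neg]
    rintro ⟨c, hcc⟩
    obtain ⟨m, hm⟩ := hodd
    omega
  rw [hresv, add_zero]
  have hr : entH n₀ l ≤ 2 * ((1/(n₀:ℝ)^2) * En n₀ l) := by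
    have h2 : ((entH n₀ l : ℝ):ℂ)
        ≤ (((2 * ((1/(n₀:ℝ)^2) * En n₀ l)) : ℝ):ℂ) := by
      unfold En
      rw [Complex.ofReal_mul, Complex.ofReal_ofNat]
      exact hc
    exact_mod_cast h2
  have e : 2*((1/(n₀:ℝ)^2) * En n₀ l) = (2*En n₀ l)/(n₀:ℝ)^2 := by ring
  rw [e] at hr
  have hM2 : (0:ℝ) < (n₀:ℝ)^2 := by positivity
  rw [le_div_iff₀ hM2] at hr
  linarith

lemma all_levels (n₀ : ℕ) (h3 : 3 ≤ n₀) (hbase : Tstat n₀) :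
    ∀ m : ℕ, Tstat (n₀ * 2^m) := by
  intro m
  induction m with
  | zero =>
    rw [pow_zero, mul_one]
    exact hbase
  | succ m ih =>
    have h2 : n₀ * 2^(m+1) = 2*(n₀*2^m) := by ring
    rw [h2]
    refine doubling (n₀*2^m) ?_ ih
    have h1 : 1 ≤ 2^m := Nat.one_le_two_pow
    calc 3 ≤ n₀ := h3
      _ = n₀ * 1 := (mul_one n₀).symm
      _ ≤ n₀ * 2^m := Nat.mul_le_mul_left n₀ h1

end LSIAux

/-- for odd `n₀ ≥ 3`, if the log-Sobolev inequality with constant 2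
holds for the word-length `ψ_{n₀}`, then it holds for `ψ_{n₀·2^m}` for all `m ≥ 1`.
The inequalities are in the complex order. -/
theorem lsi_dyadic_lift_odd_base (n₀ : ℕ) (h3 : 3 ≤ n₀) (hodd : Odd n₀)
    (hLSI : ∀ l : Fin n₀ → ℝ, (∀ j, 0 ≤ l j) →
      ((entH n₀ l : ℝ) : ℂ) ≤ 2 * quadForm n₀ (PsiMat n₀) l) :
    ∀ m : ℕ, 1 ≤ m → ∀ l : Fin (n₀ * 2 ^ m) → ℝ, (∀ j, 0 ≤ l j) →
      ((entH (n₀ * 2 ^ m) l : ℝ) : ℂ) ≤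
        2 * quadForm (n₀ * 2 ^ m) (PsiMat (n₀ * 2 ^ m)) l := by
  have hbase : LSIAux.Tstat n₀ := LSIAux.base_case n₀ h3 hodd hLSI
  have hall := LSIAux.all_levels n₀ h3 hbase
  intro m _ l hl
  have hT := hall m l hl
  have hM : 0 < n₀ * 2 ^ m := by positivity
  rw [show PsiMat (n₀ * 2 ^ m) = GammaMat (n₀ * 2 ^ m) (fun k => psiLen (n₀ * 2 ^ m) k) from rfl,
    LSIAux.quadForm_eq_fourier (n₀ * 2 ^ m) hM (fun k => psiLen (n₀ * 2 ^ m) k) l]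
  have hreal : entH (n₀ * 2 ^ m) l
      ≤ 2 * ((1/((n₀ * 2 ^ m : ℕ):ℝ)^2) * LSIAux.En (n₀ * 2 ^ m) l) := by
    have h1 := LSIAux.resv_nonneg (n₀ * 2 ^ m) l
    have hM2 : (0:ℝ) < ((n₀ * 2 ^ m : ℕ):ℝ)^2 := by positivity
    have e : 2*((1/((n₀ * 2 ^ m : ℕ):ℝ)^2) * LSIAux.En (n₀ * 2 ^ m) l)
        = (2*LSIAux.En (n₀ * 2 ^ m) l)/((n₀ * 2 ^ m : ℕ):ℝ)^2 := by ring
    rw [e, le_div_iff₀ hM2]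
    linarith
  have h2 : ((entH (n₀ * 2 ^ m) l : ℝ):ℂ)
      ≤ (((2 * ((1/((n₀ * 2 ^ m : ℕ):ℝ)^2) * LSIAux.En (n₀ * 2 ^ m) l)) : ℝ):ℂ) := by
    exact_mod_cast hreal
  rw [Complex.ofReal_mul, Complex.ofReal_ofNat] at h2
  unfold LSIAux.En at h2
  exact h2
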